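/- arXiv:2603.16513 — 2 statements merged into one kernel-verified Lean document; each statement's English description precedes it below -/
import Mathlib

section
/- In the setting of the fused bidirectional recurrence y_i = W_f h_i + W_b ĥ_i, if W_f = W_b, then for every offset Δ with 1 ≤ i−Δ and i+Δ ≤ N, the Jacobian of y_i with respect to x_{i−Δ} equals the Jacobian of y_i with respect to x_{i+Δ}, both equal to W_f A^Δ B. -/
/-- Fused bidirectional state-space representation
`y_i = W_f h_i + W_b ĥ_i` with
`h_i = ∑_{m=1}^i A^{i-m} B x_m` and `ĥ_i = ∑_{m=i}^N A^{m-i} B x_m`. -/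
def fusedOutput {d e p : ℕ} (N : ℕ) (A : Matrix (Fin d) (Fin d) ℝ)
    (B : Matrix (Fin d) (Fin e) ℝ)
    (Wf Wb : Matrix (Fin p) (Fin d) ℝ)
    (x : ℕ → Fin e → ℝ) (i : ℕ) : Fin p → ℝ :=
  Wf.mulVec (∑ m ∈ Finset.Icc 1 i, (A ^ (i - m) * B).mulVec (x m))
    + Wb.mulVec (∑ m ∈ Finset.Icc i N, (A ^ (m - i) * B).mulVec (x m))

lemma aux_fwd {d e p : ℕ} (N : ℕ) (A : Matrix (Fin d) (Fin d) ℝ)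
    (B : Matrix (Fin d) (Fin e) ℝ) (W : Matrix (Fin p) (Fin d) ℝ)
    (x : ℕ → Fin e → ℝ) (i k Δ : ℕ)
    (hk1 : k ∈ Finset.Icc 1 i) (hk2 : k ∉ Finset.Icc i N) (hΔ : i - k = Δ) :
    fderiv ℝ (fun u => fusedOutput N A B W W (Function.update x k u) i) (x k)
      = LinearMap.toContinuousLinearMap ((W * A ^ Δ * B).mulVecLin) := by
  have key : (fun u : Fin e → ℝ => fusedOutput N A B W W (Function.update x k u) i)
      = fun u => (LinearMap.toContinuousLinearMap ((W * A ^ Δ * B).mulVecLin)) u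
        + (W.mulVec (∑ m ∈ (Finset.Icc 1 i).erase k, (A ^ (i - m) * B).mulVec (x m))
          + W.mulVec (∑ m ∈ Finset.Icc i N, (A ^ (m - i) * B).mulVec (x m))) := by
    funext u
    simp only [fusedOutput, LinearMap.coe_toContinuousLinearMap', Matrix.mulVecLin_apply]
    have h1 : ∑ m ∈ Finset.Icc 1 i, (A ^ (i - m) * B).mulVec (Function.update x k u m)
        = (A ^ Δ * B).mulVec u
          + ∑ m ∈ (Finset.Icc 1 i).erase k, (A ^ (i - m) * B).mulVec (x m) := by
      rw [← Finset.add_sum_erase _ _ hk1, Function.update_self, hΔ]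
      congr 1
      exact Finset.sum_congr rfl fun m hm => by
        rw [Function.update_of_ne (Finset.ne_of_mem_erase hm)]
    have h2 : ∑ m ∈ Finset.Icc i N, (A ^ (m - i) * B).mulVec (Function.update x k u m)
        = ∑ m ∈ Finset.Icc i N, (A ^ (m - i) * B).mulVec (x m) :=
      Finset.sum_congr rfl fun m hm => by
        rw [Function.update_of_ne (by rintro rfl; exact hk2 hm)]
    rw [h1, h2, Matrix.mulVec_add, Matrix.mulVec_mulVec, ← Matrix.mul_assoc]
    abel
  rw [key, fderiv_add_const]
  exact ContinuousLinearMap.fderiv _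

lemma aux_bwd {d e p : ℕ} (N : ℕ) (A : Matrix (Fin d) (Fin d) ℝ)
    (B : Matrix (Fin d) (Fin e) ℝ) (W : Matrix (Fin p) (Fin d) ℝ)
    (x : ℕ → Fin e → ℝ) (i k Δ : ℕ)
    (hk1 : k ∉ Finset.Icc 1 i) (hk2 : k ∈ Finset.Icc i N) (hΔ : k - i = Δ) :
    fderiv ℝ (fun u => fusedOutput N A B W W (Function.update x k u) i) (x k)
      = LinearMap.toContinuousLinearMap ((W * A ^ Δ * B).mulVecLin) := by
  have key : (fun u : Fin e → ℝ => fusedOutput N A B W W (Function.update x k u) i)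
      = fun u => (LinearMap.toContinuousLinearMap ((W * A ^ Δ * B).mulVecLin)) u
        + (W.mulVec (∑ m ∈ Finset.Icc 1 i, (A ^ (i - m) * B).mulVec (x m))
          + W.mulVec (∑ m ∈ (Finset.Icc i N).erase k, (A ^ (m - i) * B).mulVec (x m))) := by
    funext u
    simp only [fusedOutput, LinearMap.coe_toContinuousLinearMap', Matrix.mulVecLin_apply]
    have h1 : ∑ m ∈ Finset.Icc 1 i, (A ^ (i - m) * B).mulVec (Function.update x k u m)
        = ∑ m ∈ Finset.Icc 1 i, (A ^ (i - m) * B).mulVec (x m) :=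
      Finset.sum_congr rfl fun m hm => by
        rw [Function.update_of_ne (by rintro rfl; exact hk1 hm)]
    have h2 : ∑ m ∈ Finset.Icc i N, (A ^ (m - i) * B).mulVec (Function.update x k u m)
        = (A ^ Δ * B).mulVec u
          + ∑ m ∈ (Finset.Icc i N).erase k, (A ^ (m - i) * B).mulVec (x m) := by
      rw [← Finset.add_sum_erase _ _ hk2, Function.update_self, hΔ]
      congr 1
      exact Finset.sum_congr rfl fun m hm => by
        rw [Function.update_of_ne (Finset.ne_of_mem_erase hm)]
    rw [h1, h2, Matrix.mulVec_add, Matrix.mulVec_mulVec, ← Matrix.mul_assoc]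
    abel
  rw [key, fderiv_add_const]
  exact ContinuousLinearMap.fderiv _

theorem symmetric_fusion_zero_phase (d e p N : ℕ)
    (A : Matrix (Fin d) (Fin d) ℝ) (B : Matrix (Fin d) (Fin e) ℝ)
    (Wf Wb : Matrix (Fin p) (Fin d) ℝ) (hW : Wf = Wb)
    (x : ℕ → Fin e → ℝ) (i Δ : ℕ)
    (hΔ1 : 1 ≤ Δ) (hlow : Δ < i) (hhigh : i + Δ ≤ N) :
    fderiv ℝ (fun u => fusedOutput N A B Wf Wb (Function.update x (i - Δ) u) i)
        (x (i - Δ))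
      = LinearMap.toContinuousLinearMap ((Wf * A ^ Δ * B).mulVecLin) ∧
    fderiv ℝ (fun u => fusedOutput N A B Wf Wb (Function.update x (i + Δ) u) i)
        (x (i + Δ))
      = LinearMap.toContinuousLinearMap ((Wf * A ^ Δ * B).mulVecLin) := by
  subst hW
  refine ⟨aux_fwd N A B Wf x i (i - Δ) Δ ?_ ?_ (by omega),
    aux_bwd N A B Wf x i (i + Δ) Δ ?_ ?_ (by omega)⟩ <;>
    simp only [Finset.mem_Icc] <;> omega
end

section
/- In the fused bidirectional recurrence with W_f = W_b = W, if W A^Δ B ≠ 0 for all Δ with 0 ≤ Δ ≤ N−1 (interpreting A^0 = I), then for every position i and every k in {1,...,N}, the Jacobian of y_i with respect to x_k is nonzero; i.e., every input influences every output. -/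
theorem global_receptive_field (d e p N : ℕ)
    (A : Matrix (Fin d) (Fin d) ℝ) (B : Matrix (Fin d) (Fin e) ℝ)
    (W : Matrix (Fin p) (Fin d) ℝ)
    (hnondeg : ∀ Δ : ℕ, Δ ≤ N - 1 → W * A ^ Δ * B ≠ 0)
    (x : ℕ → Fin e → ℝ) :
    ∀ i k : ℕ, 1 ≤ i → i ≤ N → 1 ≤ k → k ≤ N →
      fderiv ℝ (fun u => fusedOutput N A B W W (Function.update x k u) i)
        (x k) ≠ 0 := by
  intro i k hi1 hiN hk1 hkN
  classical
  set M : Matrix (Fin p) (Fin e) ℝ :=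
    (if k ≤ i then W * A ^ (i - k) * B else 0)
    + (if i ≤ k then W * A ^ (k - i) * B else 0) with hM
  set c1 : Fin p → ℝ :=
    W.mulVec (∑ m ∈ (Finset.Icc 1 i).erase k, (A ^ (i - m) * B).mulVec (x m)) with hc1
  set c2 : Fin p → ℝ :=
    W.mulVec (∑ m ∈ (Finset.Icc i N).erase k, (A ^ (m - i) * B).mulVec (x m)) with hc2
  -- sum splitting lemma
  have hsplit : ∀ (s : Finset ℕ) (C : ℕ → Matrix (Fin d) (Fin e) ℝ) (u : Fin e → ℝ),
      ∑ m ∈ s, (C m).mulVec (Function.update x k u m)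
        = (if k ∈ s then (C k).mulVec u else 0)
          + ∑ m ∈ s.erase k, (C m).mulVec (x m) := by
    intro s C u
    by_cases hk : k ∈ s
    · rw [if_pos hk, ← Finset.add_sum_erase _ _ hk, Function.update_self]
      congr 1
      exact Finset.sum_congr rfl fun m hm => by
        rw [Function.update_of_ne (Finset.ne_of_mem_erase hm)]
    · rw [if_neg hk, Finset.erase_eq_of_notMem hk, zero_add]
      exact Finset.sum_congr rfl fun m hm => by
        rw [Function.update_of_ne (by rintro rfl; exact hk hm)]
  have hfun : (fun u => fusedOutput N A B W W (Function.update x k u) i)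
      = fun u => M.mulVec u + (c1 + c2) := by
    funext u
    unfold fusedOutput
    rw [hsplit (Finset.Icc 1 i) (fun m => A ^ (i - m) * B) u,
        hsplit (Finset.Icc i N) (fun m => A ^ (m - i) * B) u]
    have hmem1 : (k ∈ Finset.Icc 1 i) = (k ≤ i) := by
      simp [Finset.mem_Icc, hk1]
    have hmem2 : (k ∈ Finset.Icc i N) = (i ≤ k) := by
      simp [Finset.mem_Icc, hkN]
    rw [Matrix.mulVec_add, Matrix.mulVec_add, hM, Matrix.add_mulVec]
    simp only [hmem1, hmem2]
    have e1 : W.mulVec (if k ≤ i then (A ^ (i - k) * B).mulVec u else 0)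
        = (if k ≤ i then W * A ^ (i - k) * B else 0).mulVec u := by
      split_ifs with h
      · rw [Matrix.mulVec_mulVec, Matrix.mul_assoc]
      · simp
    have e2 : W.mulVec (if i ≤ k then (A ^ (k - i) * B).mulVec u else 0)
        = (if i ≤ k then W * A ^ (k - i) * B else 0).mulVec u := by
      split_ifs with h
      · rw [Matrix.mulVec_mulVec, Matrix.mul_assoc]
      · simp
    rw [e1, e2, ← hc1, ← hc2]
    abel
  have hMne : M ≠ 0 := by
    rcases lt_trichotomy k i with h | h | h
    · have : M = W * A ^ (i - k) * B := by
        rw [hM, if_pos h.le, if_neg (not_le.mpr h), add_zero]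
      rw [this]
      exact hnondeg _ (by omega)
    · subst h
      have h0 : W * A ^ 0 * B ≠ 0 := hnondeg 0 (Nat.zero_le _)
      have : M = W * A ^ 0 * B + W * A ^ 0 * B := by
        simp [hM]
      rw [this]
      intro hcon
      have h2 : (2:ℝ) • (W * A ^ 0 * B) = 0 := by
        rw [two_smul]; exact hcon
      rcases smul_eq_zero.mp h2 with h | h
      · norm_num at h
      · exact h0 h
    · have : M = W * A ^ (k - i) * B := by
        rw [hM, if_neg (not_le.mpr h), if_pos h.le, zero_add]
      rw [this]
      exact hnondeg _ (by omega)
  have hderiv : HasFDerivAt (fun u : Fin e → ℝ => M.mulVec u + (c1 + c2))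
      (LinearMap.toContinuousLinearMap (Matrix.mulVecLin M)) (x k) := by
    have h := (LinearMap.toContinuousLinearMap (Matrix.mulVecLin M)).hasFDerivAt
      (x := x k)
    simpa using h.add_const (c1 + c2)
  rw [hfun, hderiv.fderiv]
  intro hzero
  apply hMne
  ext a b
  have := congrFun (congrArg (fun L => (L : (Fin e → ℝ) →L[ℝ] (Fin p → ℝ)) (Pi.single b 1)) hzero) a
  simpa [Matrix.mulVecLin, Matrix.mulVec_single] using this
end
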